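/- Let d ≥ 1, let ε = exp(2πi/d), let S ∈ M(d,ℂ) be the cyclic shift matrix (S e_l = e_{l+1 mod d} on the standard basis), and for k = 0,…,d−1 let u_k ∈ ℂ^d be the normalized vector with components (u_k)_l = (1/√d)·conj(ε)^{kl}. Let A = (a_{ij}) ∈ M(d,ℂ) and let T ∈ M(d²,ℂ) be the block matrix with blocks T_{ij} = a_{ij} S^{i−j} for i,j = 0,…,d−1 (where S^{i−j} means (S†)^{j−i} when j > i). Then T is separable if and only if T is positive semidefinite, and this holds if and only if all d matrices A ∘ u_k u_k†, k = 0,…,d−1, are positive semidefinite. -/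

import Mathlib

open Matrix Kronecker
open scoped ComplexOrder

/-- The primitive `d`-th root of unity `ε = exp(2πi/d)`. -/
noncomputable def epsRoot (d : ℕ) : ℂ := Complex.exp (2 * Real.pi * Complex.I / d)

/-- The cyclic shift matrix `S ∈ M(d,ℂ)`, `S e_l = e_{l+1 mod d}`. -/
def shiftS (d : ℕ) : Matrix (Fin d) (Fin d) ℂ :=
  Matrix.of fun i j : Fin d => if (i : ℕ) = ((j : ℕ) + 1) % d then 1 else 0

/-- The normalized eigenvector `u_k` of `S`, `(u_k)_l = (1/√d)·(conj ε)^{kl}`. -/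
noncomputable def uVec (d : ℕ) (k : Fin d) : Fin d → ℂ :=
  fun l => (Real.sqrt d : ℂ)⁻¹ * (starRingEnd ℂ (epsRoot d)) ^ ((k : ℕ) * (l : ℕ))

/-- A matrix in `M(d²,ℂ)` is separable if it is a finite sum of Kronecker
products of positive semidefinite matrices. -/
def MatSeparable {d : ℕ} (T : Matrix (Fin d × Fin d) (Fin d × Fin d) ℂ) : Prop :=
  ∃ (s : ℕ) (P : Fin s → Matrix (Fin d) (Fin d) ℂ)
    (Q : Fin s → Matrix (Fin d) (Fin d) ℂ),
      (∀ i, (P i).PosSemidef) ∧ (∀ i, (Q i).PosSemidef) ∧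
        T = ∑ i : Fin s, (P i) ⊗ₖ (Q i)

set_option linter.unusedSectionVars false

noncomputable def eChar (d : ℕ) (a : Fin d) : ℂ := epsRoot d ^ (a : ℕ)

section aux
variable {d : ℕ} [NeZero d]


lemma epsRoot_prim : IsPrimitiveRoot (epsRoot d) d :=
  Complex.isPrimitiveRoot_exp d (NeZero.ne d)

lemma epsRoot_pow_d : epsRoot d ^ d = 1 := epsRoot_prim.pow_eq_one

lemma epsRoot_pow_mod (a : ℕ) : epsRoot d ^ (a % d) = epsRoot d ^ a := by
  conv_rhs => rw [← Nat.div_add_mod a d]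
  rw [pow_add, pow_mul, epsRoot_pow_d, one_pow, one_mul]

lemma epsRoot_mul_conj : epsRoot d * (starRingEnd ℂ) (epsRoot d) = 1 := by
  rw [epsRoot, ← Complex.exp_conj, ← Complex.exp_add]
  have : (starRingEnd ℂ) (2 * ↑Real.pi * Complex.I / ↑d) = -(2 * ↑Real.pi * Complex.I / ↑d) := by
    simp [map_div₀, Complex.conj_I]
    ring_nf
    simp [Complex.conj_ofReal, map_ofNat]
    ring
  rw [this, add_neg_cancel, Complex.exp_zero]

lemma eChar_zero : eChar d 0 = 1 := by simp [eChar]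

lemma eChar_add (a b : Fin d) : eChar d (a + b) = eChar d a * eChar d b := by
  rw [eChar, eChar, eChar, Fin.val_add, epsRoot_pow_mod, pow_add]

lemma eChar_conj (a : Fin d) : (starRingEnd ℂ) (eChar d a) = eChar d (-a) := by
  have h1 : eChar d a * eChar d (-a) = 1 := by
    rw [← eChar_add, add_neg_cancel, eChar_zero]
  have h2 : eChar d a * (starRingEnd ℂ) (eChar d a) = 1 := by
    rw [eChar, map_pow, ← mul_pow, epsRoot_mul_conj, one_pow]
  have hne : eChar d a ≠ 0 := by
    intro h; rw [h, zero_mul] at h1; exact one_ne_zero h1.symm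
  have := mul_left_cancel₀ hne (h2.trans h1.symm)
  exact this

lemma eChar_sum (a : Fin d) :
    ∑ k : Fin d, eChar d (k * a) = if a = 0 then (d : ℂ) else 0 := by
  have hval : ∀ k : Fin d, eChar d (k * a) = (epsRoot d ^ (a : ℕ)) ^ (k : ℕ) := by
    intro k
    rw [eChar, Fin.val_mul, epsRoot_pow_mod, ← pow_mul, mul_comm]
  split_ifs with h
  · subst h; simp [eChar_zero, Finset.card_univ]
  · have hpos : 0 < (a : ℕ) := by
      rcases Nat.eq_zero_or_pos (a : ℕ) with h0 | h0
      · exact absurd (Fin.ext h0) h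
      · exact h0
    have hx : epsRoot d ^ (a : ℕ) ≠ 1 :=
      epsRoot_prim.pow_ne_one_of_pos_of_lt hpos.ne' a.isLt
    calc ∑ k : Fin d, eChar d (k * a)
        = ∑ k ∈ Finset.range d, (epsRoot d ^ (a : ℕ)) ^ k := by
          rw [← Fin.sum_univ_eq_sum_range (fun k => (epsRoot d ^ (a : ℕ)) ^ k) d]
          exact Finset.sum_congr rfl fun k _ => hval k
      _ = ((epsRoot d ^ (a : ℕ)) ^ d - 1) / (epsRoot d ^ (a : ℕ) - 1) := geom_sum_eq hx d
      _ = 0 := by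
          rw [← pow_mul, mul_comm, pow_mul, epsRoot_pow_d, one_pow, sub_self, zero_div]



lemma uVec_eq (k l : Fin d) :
    uVec d k l = (Real.sqrt d : ℂ)⁻¹ * eChar d (-(k * l)) := by
  rw [uVec, ← eChar_conj, eChar, Fin.val_mul, epsRoot_pow_mod, map_pow]

lemma sqrt_inv_sq : ((Real.sqrt d : ℂ))⁻¹ * ((Real.sqrt d : ℂ))⁻¹ = (d : ℂ)⁻¹ := by
  have h : ((Real.sqrt d : ℂ)) * (Real.sqrt d : ℂ) = (d : ℂ) := by
    have := Real.mul_self_sqrt (le_of_lt (Nat.cast_pos.mpr (NeZero.pos d)) : (0:ℝ) ≤ d)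
    exact_mod_cast congrArg (Complex.ofReal) this
  rw [← mul_inv, h]

noncomputable def Pmat (d : ℕ) [NeZero d] (k : Fin d) : Matrix (Fin d) (Fin d) ℂ :=
  vecMulVec (uVec d k) (star (uVec d k))

lemma eChar_mul_eChar (a b : Fin d) : eChar d a * eChar d b = eChar d (a + b) :=
  (eChar_add a b).symm

open Fin.CommRing in
lemma Pmat_apply (k p q : Fin d) :
    Pmat d k p q = (d : ℂ)⁻¹ * eChar d (k * (q - p)) := by
  rw [Pmat, vecMulVec_apply, Pi.star_apply, uVec_eq, uVec_eq]
  rw [RCLike.star_def, _root_.map_mul, eChar_conj, neg_neg, map_inv₀, Complex.conj_ofReal]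
  have he : eChar d (-(k * p)) * eChar d (k * q) = eChar d (k * (q - p)) := by
    rw [eChar_mul_eChar]; ring_nf
  calc (Real.sqrt d : ℂ)⁻¹ * eChar d (-(k * p)) * ((Real.sqrt d : ℂ)⁻¹ * eChar d (k * q))
      = ((Real.sqrt d : ℂ)⁻¹ * (Real.sqrt d : ℂ)⁻¹) * (eChar d (-(k * p)) * eChar d (k * q)) := by
        ring
    _ = (d : ℂ)⁻¹ * eChar d (k * (q - p)) := by rw [sqrt_inv_sq, he]

lemma shift_pow_entry (n : ℕ) : ∀ p q : Fin d,
    ((shiftS d) ^ n) p q = if (p : ℕ) = ((q : ℕ) + n) % d then 1 else 0 := by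
  induction n with
  | zero =>
    intro p q
    rw [pow_zero, one_apply]
    congr 1
    rw [Nat.add_zero, Nat.mod_eq_of_lt q.isLt, Fin.ext_iff]
  | succ n ih =>
    intro p q
    rw [pow_succ', Matrix.mul_apply]
    have hlt : ((q : ℕ) + n) % d < d := Nat.mod_lt _ (NeZero.pos d)
    rw [Finset.sum_eq_single (⟨((q : ℕ) + n) % d, hlt⟩ : Fin d)]
    · rw [ih, if_pos rfl, mul_one, shiftS, Matrix.of_apply]
      congr 2
      simp [Nat.mod_add_mod, Nat.add_assoc]
    · intro b _ hb
      rw [ih, if_neg, mul_zero]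
      intro h
      exact hb (Fin.ext h)
    · intro h
      exact absurd (Finset.mem_univ _) h

lemma blk_entry (i j p q : Fin d) :
    (if (j : ℕ) ≤ (i : ℕ) then (shiftS d) ^ ((i : ℕ) - (j : ℕ))
       else ((shiftS d)ᴴ) ^ ((j : ℕ) - (i : ℕ))) p q
    = if p + j = q + i then 1 else 0 := by
  have hfin : (p + j = q + i) ↔ (((p:ℕ) + (j:ℕ)) % d = ((q:ℕ) + (i:ℕ)) % d) := by
    rw [Fin.ext_iff, Fin.val_add, Fin.val_add]
  by_cases hle : (j : ℕ) ≤ (i : ℕ)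
  · rw [if_pos hle, shift_pow_entry]
    refine if_congr ?_ rfl rfl
    rw [hfin]
    constructor
    · intro h
      have h1 : (p : ℕ) % d = ((q : ℕ) + ((i : ℕ) - (j : ℕ))) % d := by
        rw [Nat.mod_eq_of_lt p.isLt, h]
      have h2 := Nat.ModEq.add_right (j : ℕ) h1
      unfold Nat.ModEq at h2
      convert h2 using 2
      omega
    · intro h
      have h2 : ((p:ℕ)) % d = ((q:ℕ) + ((i:ℕ) - (j:ℕ))) % d := by
        apply Nat.ModEq.add_right_cancel' (j : ℕ)
        unfold Nat.ModEq
        convert h using 2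
        omega
      rw [Nat.mod_eq_of_lt p.isLt] at h2
      exact h2
  · rw [if_neg hle, ← conjTranspose_pow, conjTranspose_apply, shift_pow_entry,
      apply_ite (star : ℂ → ℂ), star_one, star_zero]
    refine if_congr ?_ rfl rfl
    rw [hfin]
    push_neg at hle
    constructor
    · intro h
      have h1 : (q : ℕ) % d = ((p : ℕ) + ((j : ℕ) - (i : ℕ))) % d := by
        rw [Nat.mod_eq_of_lt q.isLt, h]
      have h2 := Nat.ModEq.add_right (i : ℕ) h1
      unfold Nat.ModEq at h2
      symm
      convert h2 using 2
      omega
    · intro h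
      have h2 : ((q:ℕ)) % d = ((p:ℕ) + ((j:ℕ) - (i:ℕ))) % d := by
        apply Nat.ModEq.add_right_cancel' (i : ℕ)
        unfold Nat.ModEq
        convert h.symm using 2
        omega
      rw [Nat.mod_eq_of_lt q.isLt] at h2
      exact h2



noncomputable def Tcirc (d : ℕ) (A : Matrix (Fin d) (Fin d) ℂ) :
    Matrix (Fin d × Fin d) (Fin d × Fin d) ℂ :=
  ∑ i : Fin d, ∑ j : Fin d,
    (Matrix.single i j (1 : ℂ)) ⊗ₖ
      (A i j •
        (if (j : ℕ) ≤ (i : ℕ) then (shiftS d) ^ ((i : ℕ) - (j : ℕ))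
         else ((shiftS d)ᴴ) ^ ((j : ℕ) - (i : ℕ))))

lemma Tcirc_apply (A : Matrix (Fin d) (Fin d) ℂ) (i p j q : Fin d) :
    Tcirc d A (i, p) (j, q) = A i j * (if p + j = q + i then 1 else 0) := by
  rw [Tcirc]
  simp only [Matrix.sum_apply, Matrix.kroneckerMap_apply, Matrix.smul_apply,
    Matrix.single, Matrix.of_apply, smul_eq_mul]
  rw [Finset.sum_eq_single i]
  · rw [Finset.sum_eq_single j]
    · rw [if_pos ⟨rfl, rfl⟩, one_mul, blk_entry]
    · intro b _ hb
      rw [if_neg (by tauto), zero_mul]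
    · intro h; exact absurd (Finset.mem_univ _) h
  · intro b _ hb
    apply Finset.sum_eq_zero
    intro c _
    rw [if_neg (by tauto), zero_mul]

  · intro h; exact absurd (Finset.mem_univ _) h

open Fin.CommRing in
lemma key_decomp (A : Matrix (Fin d) (Fin d) ℂ) :
    Tcirc d A = ∑ k : Fin d, ((d : ℂ) • (Matrix.hadamard A (Pmat d k))) ⊗ₖ Pmat d (-k) := by
  have hd0 : (d : ℂ) ≠ 0 := Nat.cast_ne_zero.mpr (NeZero.ne d)
  ext ⟨i, p⟩ ⟨j, q⟩
  rw [Tcirc_apply]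
  simp only [Matrix.sum_apply, Matrix.kroneckerMap_apply, Matrix.smul_apply,
    Matrix.hadamard_apply, smul_eq_mul]
  have hterm : ∀ k : Fin d,
      (d : ℂ) * (A i j * Pmat d k i j) * Pmat d (-k) p q
        = (d : ℂ)⁻¹ * A i j * eChar d (k * ((j - i) + (p - q))) := by
    intro k
    rw [Pmat_apply, Pmat_apply]
    have h1 : eChar d (k * (j - i)) * eChar d ((-k) * (q - p))
        = eChar d (k * ((j - i) + (p - q))) := by
      rw [← eChar_add]; congr 1; ring
    calc (d : ℂ) * (A i j * ((d : ℂ)⁻¹ * eChar d (k * (j - i)))) *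
          ((d : ℂ)⁻¹ * eChar d ((-k) * (q - p)))
        = ((d : ℂ) * (d : ℂ)⁻¹) * (d : ℂ)⁻¹ * A i j *
            (eChar d (k * (j - i)) * eChar d ((-k) * (q - p))) := by ring
      _ = (d : ℂ)⁻¹ * A i j * eChar d (k * ((j - i) + (p - q))) := by
          rw [mul_inv_cancel₀ hd0, one_mul, h1]
  rw [Finset.sum_congr rfl fun k _ => hterm k, ← Finset.mul_sum, eChar_sum]
  have hcond : ((j - i) + (p - q) = 0) ↔ (p + j = q + i) := by
    constructor
    · intro h
      have : (p + j) - (q + i) = 0 := by rw [← h]; ring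
      exact sub_eq_zero.mp this
    · intro h
      have : (j - i) + (p - q) = (p + j) - (q + i) := by ring
      rw [this, h, sub_self]
  split_ifs with h1 h2 h2
  · rw [mul_comm]
    field_simp
  · exact absurd (hcond.mpr h1) h2
  · exact absurd (hcond.mp h2) h1
  · rw [mul_zero, mul_zero]

-- inner products
open Fin.CommRing in
lemma uVec_inner (a b : Fin d) :
    star (uVec d a) ⬝ᵥ uVec d b = if a = b then 1 else 0 := by
  have hd0 : (d : ℂ) ≠ 0 := Nat.cast_ne_zero.mpr (NeZero.ne d)
  have hterm : ∀ l : Fin d,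
      star (uVec d a) l * uVec d b l = (d : ℂ)⁻¹ * eChar d (l * (a - b)) := by
    intro l
    rw [Pi.star_apply, uVec_eq, uVec_eq, RCLike.star_def, _root_.map_mul, eChar_conj, neg_neg,
      map_inv₀, Complex.conj_ofReal]
    have he : eChar d (a * l) * eChar d (-(b * l)) = eChar d (l * (a - b)) := by
      rw [← eChar_add]; congr 1; ring
    calc (Real.sqrt d : ℂ)⁻¹ * eChar d (a * l) * ((Real.sqrt d : ℂ)⁻¹ * eChar d (-(b * l)))
        = ((Real.sqrt d : ℂ)⁻¹ * (Real.sqrt d : ℂ)⁻¹) *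
            (eChar d (a * l) * eChar d (-(b * l))) := by ring
      _ = (d : ℂ)⁻¹ * eChar d (l * (a - b)) := by rw [sqrt_inv_sq, he]
  rw [dotProduct, Finset.sum_congr rfl fun l _ => hterm l, ← Finset.mul_sum, eChar_sum]
  have hcond : (a - b = 0) ↔ (a = b) := sub_eq_zero
  split_ifs with h1 h2 h2
  · exact inv_mul_cancel₀ hd0
  · exact absurd (hcond.mp h1) h2
  · exact absurd (hcond.mpr h2) h1
  · exact mul_zero _

lemma dot_kron (M N : Matrix (Fin d) (Fin d) ℂ) (x v : Fin d → ℂ) :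
    star (fun ip : Fin d × Fin d => x ip.1 * v ip.2) ⬝ᵥ
      ((M ⊗ₖ N) *ᵥ fun ip : Fin d × Fin d => x ip.1 * v ip.2)
    = (star x ⬝ᵥ M *ᵥ x) * (star v ⬝ᵥ N *ᵥ v) := by
  simp only [dotProduct, mulVec, Matrix.kroneckerMap_apply, Pi.star_apply, Fintype.sum_prod_type,
    star_mul']
  rw [Finset.sum_mul_sum]
  refine Finset.sum_congr rfl fun i _ => ?_
  refine Finset.sum_congr rfl fun p _ => ?_
  simp only [Finset.mul_sum, Finset.sum_mul]
  rw [Finset.sum_comm]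
  refine Finset.sum_congr rfl fun j _ => ?_
  refine Finset.sum_congr rfl fun q _ => ?_
  ring



lemma kron_psd {M N : Matrix (Fin d) (Fin d) ℂ} (hM : M.PosSemidef) (hN : N.PosSemidef) :
    (M ⊗ₖ N).PosSemidef := by
  exact hM.kronecker hN

lemma Pmat_psd (k : Fin d) : (Pmat d k).PosSemidef := by
  have h : Pmat d k = (Matrix.replicateCol (Fin 1) (uVec d k)) * (Matrix.replicateCol (Fin 1) (uVec d k))ᴴ := by
    ext p q
    simp [Pmat, Matrix.mul_apply, Matrix.replicateCol_apply, Matrix.conjTranspose_apply,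
      vecMulVec_apply]
  rw [h]
  exact Matrix.posSemidef_self_mul_conjTranspose _

lemma smul_psd {M : Matrix (Fin d) (Fin d) ℂ} (hM : M.PosSemidef) :
    ((d : ℂ) • M).PosSemidef := by
  refine Matrix.PosSemidef.of_dotProduct_mulVec_nonneg ?_ ?_
  · rw [Matrix.IsHermitian, Matrix.conjTranspose_smul, hM.1]
    congr 1
    simp
  · intro x
    rw [Matrix.smul_mulVec, dotProduct_smul, smul_eq_mul]
    have h1 : (0 : ℂ) ≤ (d : ℂ) := by
      rw [show ((d : ℂ)) = ((d : ℝ) : ℂ) by push_cast; ring]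
      exact_mod_cast Complex.zero_le_real.mpr (Nat.cast_nonneg d)
    exact mul_nonneg h1 (hM.dotProduct_mulVec_nonneg x)

lemma sum_psd {s : ℕ} (f : Fin s → Matrix (Fin d × Fin d) (Fin d × Fin d) ℂ)
    (hf : ∀ i, (f i).PosSemidef) : (∑ i : Fin s, f i).PosSemidef := by
  classical
  refine Finset.sum_induction f Matrix.PosSemidef
    (fun a b ha hb => ha.add hb) Matrix.PosSemidef.zero (fun i _ => hf i)

lemma Pmat_mulVec (k : Fin d) (w : Fin d → ℂ) :
    Pmat d k *ᵥ w = (star (uVec d k) ⬝ᵥ w) • uVec d k := by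
  ext p
  simp only [Pmat, mulVec, dotProduct, vecMulVec_apply, Pi.smul_apply, smul_eq_mul]
  rw [Finset.sum_mul]
  refine Finset.sum_congr rfl fun q _ => ?_
  ring

lemma orth (k m : Fin d) :
    star (uVec d m) ⬝ᵥ (Pmat d k *ᵥ uVec d m) = if k = m then 1 else 0 := by
  rw [Pmat_mulVec, dotProduct_smul, smul_eq_mul, uVec_inner, uVec_inner]
  by_cases h : k = m
  · subst h; simp
  · rw [if_neg h, if_neg (fun hh => h hh.symm), mul_zero]



lemma sep_of_forall {A : Matrix (Fin d) (Fin d) ℂ}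
    (h : ∀ k : Fin d, (Matrix.hadamard A (Pmat d k)).PosSemidef) :
    MatSeparable (Tcirc d A) := by
  refine ⟨d, fun k => (d : ℂ) • (Matrix.hadamard A (Pmat d k)), fun k => Pmat d (-k),
    fun k => smul_psd (h k), fun k => Pmat_psd (-k), key_decomp A⟩

lemma psd_of_sep {A : Matrix (Fin d) (Fin d) ℂ} (h : MatSeparable (Tcirc d A)) :
    (Tcirc d A).PosSemidef := by
  obtain ⟨s, P, Q, hP, hQ, hT⟩ := h
  rw [hT]
  exact sum_psd _ fun i => kron_psd (hP i) (hQ i)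

open Fin.CommRing in
lemma forall_of_psd {A : Matrix (Fin d) (Fin d) ℂ} (h : (Tcirc d A).PosSemidef) :
    ∀ k : Fin d, (Matrix.hadamard A (Pmat d k)).PosSemidef := by
  intro k
  have hd0 : (d : ℂ) ≠ 0 := Nat.cast_ne_zero.mpr (NeZero.ne d)
  have hA : ∀ i j : Fin d, (starRingEnd ℂ) (A j i) = A i j := by
    intro i j
    have h1 := congrFun (congrFun h.1 (i, i)) (j, j)
    rw [Matrix.conjTranspose_apply, Tcirc_apply, Tcirc_apply] at h1
    simp only [if_pos (add_comm j i), if_pos (add_comm i j), mul_one] at h1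
    exact h1
  refine Matrix.PosSemidef.of_dotProduct_mulVec_nonneg ?_ ?_
  · ext i j
    rw [Matrix.conjTranspose_apply, Matrix.hadamard_apply, Matrix.hadamard_apply, star_mul']
    show (starRingEnd ℂ) (A j i) * (starRingEnd ℂ) (Pmat d k j i) = _
    rw [hA i j]
    congr 1
    rw [Pmat_apply, Pmat_apply, _root_.map_mul, eChar_conj, map_inv₀]
    congr 2
    · exact Complex.conj_natCast d
    · ring
  · intro x
    set y : Fin d × Fin d → ℂ := fun ip => x ip.1 * uVec d (-k) ip.2 with hy
    have h0 := h.dotProduct_mulVec_nonneg y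
    have hdot : ∀ (s : Finset (Fin d))
        (g : Fin d → Matrix (Fin d × Fin d) (Fin d × Fin d) ℂ),
        star y ⬝ᵥ ((∑ k' ∈ s, g k') *ᵥ y) = ∑ k' ∈ s, star y ⬝ᵥ (g k' *ᵥ y) := by
      intro s g
      classical
      induction s using Finset.induction_on with
      | empty => simp
      | insert _ _ hmem ih =>
        rw [Finset.sum_insert hmem, Finset.sum_insert hmem, Matrix.add_mulVec,
          dotProduct_add, ih]
    rw [key_decomp, hdot] at h0
    have hterm : ∀ k' : Fin d,
        star y ⬝ᵥ ((((d : ℂ) • (Matrix.hadamard A (Pmat d k'))) ⊗ₖ Pmat d (-k')) *ᵥ y)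
          = if k' = k then
              star x ⬝ᵥ (((d : ℂ) • (Matrix.hadamard A (Pmat d k'))) *ᵥ x) else 0 := by
      intro k'
      rw [hy, dot_kron, orth]
      by_cases hk : k' = k
      · rw [if_pos hk, if_pos (by rw [hk]), mul_one]
      · rw [if_neg hk, if_neg (fun hh => hk (neg_injective hh)), mul_zero]
    rw [Finset.sum_congr rfl fun k' _ => hterm k', Finset.sum_ite_eq' Finset.univ k] at h0
    rw [if_pos (Finset.mem_univ k)] at h0
    rw [Matrix.smul_mulVec, dotProduct_smul, smul_eq_mul] at h0
    have hq : star x ⬝ᵥ (Matrix.hadamard A (Pmat d k)) *ᵥ x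
        = (d : ℂ)⁻¹ * ((d : ℂ) * (star x ⬝ᵥ (Matrix.hadamard A (Pmat d k)) *ᵥ x)) := by
      field_simp
    rw [hq]
    have h1 : (0 : ℂ) ≤ (d : ℂ)⁻¹ := by
      have : ((d : ℂ))⁻¹ = ((((d : ℝ))⁻¹ : ℝ) : ℂ) := by push_cast; ring
      rw [this]
      exact Complex.zero_le_real.mpr (inv_nonneg.mpr (Nat.cast_nonneg d))
    exact mul_nonneg h1 h0


end aux

/-- the circulant-type block matrix with blocks `a_{ij} S^{i-j}`
is separable iff it is positive semidefinite, iff all `d` matrices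
`A ∘ u_k u_k†` are positive semidefinite. -/
theorem circulant_block_separable_iff {d : ℕ} (hd : 1 ≤ d)
    (A : Matrix (Fin d) (Fin d) ℂ) :
    (MatSeparable (∑ i : Fin d, ∑ j : Fin d,
        (Matrix.single i j (1 : ℂ)) ⊗ₖ
          (A i j •
            (if (j : ℕ) ≤ (i : ℕ) then (shiftS d) ^ ((i : ℕ) - (j : ℕ))
             else ((shiftS d)ᴴ) ^ ((j : ℕ) - (i : ℕ)))))
      ↔ (∑ i : Fin d, ∑ j : Fin d,
          (Matrix.single i j (1 : ℂ)) ⊗ₖ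
            (A i j •
              (if (j : ℕ) ≤ (i : ℕ) then (shiftS d) ^ ((i : ℕ) - (j : ℕ))
               else ((shiftS d)ᴴ) ^ ((j : ℕ) - (i : ℕ))))).PosSemidef) ∧
    ((∑ i : Fin d, ∑ j : Fin d,
        (Matrix.single i j (1 : ℂ)) ⊗ₖ
          (A i j •
            (if (j : ℕ) ≤ (i : ℕ) then (shiftS d) ^ ((i : ℕ) - (j : ℕ))
             else ((shiftS d)ᴴ) ^ ((j : ℕ) - (i : ℕ))))).PosSemidef
      ↔ ∀ k : Fin d,
          (Matrix.hadamard A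
            (Matrix.vecMulVec (uVec d k) (star (uVec d k)))).PosSemidef) := by
  haveI : NeZero d := ⟨by omega⟩
  change (MatSeparable (Tcirc d A) ↔ (Tcirc d A).PosSemidef) ∧
    ((Tcirc d A).PosSemidef ↔ ∀ k : Fin d, (Matrix.hadamard A (Pmat d k)).PosSemidef)
  exact ⟨⟨psd_of_sep, fun hp => sep_of_forall (forall_of_psd hp)⟩,
    ⟨forall_of_psd, fun h => psd_of_sep (sep_of_forall h)⟩⟩
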